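/- (Compatibility upgrade for frequency envelopes.) Fix 0 < ε < 1, σ > 0, δ > 0 and 0 < σ̃ < σ(1-ε). Let (c_k)_{k∈Z} and (d_k)_{k∈Z} be positive sequences with c_k ≲ 1 that are (-1,S)-admissible, meaning 2^{-(1-ε)(j-k)} ≲ c_k/c_j ≲ 2^{S(1-ε)(j-k)} for j > k (and similarly for d). Define e_k = d_k + c_k Σ_{j<k} 2^{σ̃(j-k)} d_j. Then e is σ-compatible with c, i.e. c_k Σ_{j<k} 2^{σ(1-ε)(j-k)} e_j ≲ e_k for all k. -/
import Mathlib

open Function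

lemma geom_aux (a : ℝ) (ha : 0 < a) (k : ℤ) :
    Summable (fun j : ℤ => if j < k then (2:ℝ) ^ (-(a * ((k:ℝ) - j))) else 0) ∧
    ∑' j : ℤ, (if j < k then (2:ℝ) ^ (-(a * ((k:ℝ) - j))) else 0)
      = (2:ℝ) ^ (-a) * (1 - (2:ℝ) ^ (-a))⁻¹ := by
  set r : ℝ := (2:ℝ) ^ (-a) with hrdef
  have hr0 : 0 < r := Real.rpow_pos_of_pos (by norm_num) _
  have hr1 : r < 1 := Real.rpow_lt_one_of_one_lt_of_neg (by norm_num) (by linarith)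
  set f : ℤ → ℝ := fun j => if j < k then (2:ℝ) ^ (-(a * ((k:ℝ) - j))) else 0 with hf
  set i : ℕ → ℤ := fun n => k - 1 - n with hi
  have hinj : Injective i := by
    intro m n h
    simp only [hi] at h
    omega
  have hsupp : Function.support f ⊆ Set.range i := by
    intro j hj
    have hjk : j < k := by
      by_contra h
      simp [hf, h] at hj
    exact ⟨(k - 1 - j).toNat, by simp only [hi]; omega⟩
  have hcomp : ∀ n : ℕ, f (i n) = r * r ^ n := by
    intro n
    have h1 : i n < k := by simp only [hi]; omega
    have h2 : ((i n : ℤ) : ℝ) = (k:ℝ) - 1 - n := by simp only [hi]; push_cast; ring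
    have h3 : -(a * ((k:ℝ) - (i n : ℤ))) = (-a) * (((n+1 : ℕ)) : ℝ) := by
      rw [h2]; push_cast; ring
    simp only [hf, if_pos h1, h3]
    rw [Real.rpow_mul (by norm_num : (0:ℝ) ≤ 2), Real.rpow_natCast, pow_succ]
    ring
  have hgeo : Summable (fun n : ℕ => r * r ^ n) :=
    (summable_geometric_of_lt_one hr0.le hr1).mul_left r
  have hci : f ∘ i = fun n : ℕ => r * r ^ n := funext hcomp
  have hzero : ∀ x ∉ Set.range i, f x = 0 := by
    intro x hx
    by_contra h
    exact hx (hsupp h)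
  have hsumf : Summable f := (hinj.summable_iff hzero).mp (hci ▸ hgeo)
  refine ⟨hsumf, ?_⟩
  rw [← hinj.tsum_eq hsupp]
  simp only [hcomp]; rw [tsum_mul_left, tsum_geometric_of_lt_one hr0.le hr1]




/-- Compatibility upgrade for frequency envelopes: if `c, d` are positive
`(-1,S)`-admissible sequences with `c` bounded, and
`e_k = d_k + c_k Σ_{j<k} 2^{σ̃(j-k)} d_j` with `0 < σ̃ < σ(1-ε)`,
then `e` is `σ`-compatible with `c`, i.e.
`c_k Σ_{j<k} 2^{σ(1-ε)(j-k)} e_j ≲ e_k` for all `k`. -/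
theorem envelope_compatibility_upgrade
    (ε σ σt S : ℝ) (hε : 0 < ε) (hε1 : ε < 1) (hσ : 0 < σ)
    (hσt : 0 < σt) (hσtσ : σt < σ * (1 - ε))
    (c d : ℤ → ℝ) (hc : ∀ k, 0 < c k) (hd : ∀ k, 0 < d k)
    (Cb : ℝ) (hCb : 0 < Cb) (hcb : ∀ k, c k ≤ Cb)
    (hadm_c : ∀ j k : ℤ, k < j →
      (2:ℝ) ^ (-((1 - ε) * ((j:ℝ) - k))) ≤ Cb * (c k / c j) ∧
      c k / c j ≤ Cb * (2:ℝ) ^ (S * (1 - ε) * ((j:ℝ) - k)))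
    (hadm_d : ∀ j k : ℤ, k < j →
      (2:ℝ) ^ (-((1 - ε) * ((j:ℝ) - k))) ≤ Cb * (d k / d j) ∧
      d k / d j ≤ Cb * (2:ℝ) ^ (S * (1 - ε) * ((j:ℝ) - k)))
    (hsum : ∀ k : ℤ, Summable fun j : ℤ =>
      if j < k then (2:ℝ) ^ (σt * ((j:ℝ) - k)) * d j else 0) :
    ∀ e : ℤ → ℝ,
      (e = fun k => d k + c k *
        ∑' j : ℤ, if j < k then (2:ℝ) ^ (σt * ((j:ℝ) - k)) * d j else 0) →
      ∃ C : ℝ, 0 < C ∧ ∀ k : ℤ,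
        c k * (∑' j : ℤ, if j < k then (2:ℝ) ^ (σ * (1 - ε) * ((j:ℝ) - k)) * e j else 0)
          ≤ C * e k := by
  intro e he
  have h2 : (1:ℝ) < 2 := one_lt_two
  set μ : ℝ := σ * (1 - ε) with hμ
  have hμσt : σt < μ := hσtσ
  set a : ℝ := μ - σt with hadef
  have ha : 0 < a := by simp only [hadef]; linarith
  set r : ℝ := (2:ℝ) ^ (-a) with hrdef
  have hr0 : 0 < r := Real.rpow_pos_of_pos (by norm_num) _
  have hr1 : r < 1 := Real.rpow_lt_one_of_one_lt_of_neg (by norm_num) (by linarith)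
  set C' : ℝ := r * (1 - r)⁻¹ with hC'def
  have hC'0 : 0 ≤ C' := by
    have : 0 < 1 - r := by linarith
    positivity
  refine ⟨1 + Cb * C', by positivity, ?_⟩
  intro k
  -- the envelope sum S_m for each m
  set T : ℤ → ℝ := fun m => ∑' j : ℤ, if j < m then (2:ℝ) ^ (σt * ((j:ℝ) - m)) * d j else 0
    with hT
  have hTnonneg : ∀ m, 0 ≤ T m := by
    intro m
    apply tsum_nonneg
    intro j
    by_cases hj : j < m
    · simp only [if_pos hj]
      have := (hd j).le
      positivity
    · simp [hj]
  have heT : ∀ m, e m = d m + c m * T m := by intro m; rw [he]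
  have hepos : ∀ m, 0 < e m := by
    intro m
    rw [heT m]
    have := hd m
    have := mul_nonneg (hc m).le (hTnonneg m)
    linarith
  -- T j ≤ 2^(σt*(k-j)) * T k for j < k
  have hTle : ∀ j : ℤ, j < k → T j ≤ (2:ℝ) ^ (σt * ((k:ℝ) - j)) * T k := by
    intro j hjk
    have hsummaj : Summable (fun i : ℤ =>
        (2:ℝ) ^ (σt * ((k:ℝ) - j)) * (if i < k then (2:ℝ) ^ (σt * ((i:ℝ) - k)) * d i else 0)) :=
      (hsum k).mul_left _
    have hle : ∀ i : ℤ, (if i < j then (2:ℝ) ^ (σt * ((i:ℝ) - j)) * d i else 0) ≤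
        (2:ℝ) ^ (σt * ((k:ℝ) - j)) * (if i < k then (2:ℝ) ^ (σt * ((i:ℝ) - k)) * d i else 0) := by
      intro i
      by_cases hij : i < j
      · have hik : i < k := hij.trans hjk
        simp only [if_pos hij, if_pos hik]
        rw [← mul_assoc, ← Real.rpow_add (by norm_num : (0:ℝ) < 2)]
        have : σt * ((k:ℝ) - j) + σt * ((i:ℝ) - k) = σt * ((i:ℝ) - j) := by ring
        rw [this]
      · simp only [if_neg hij]
        by_cases hik : i < k
        · simp only [if_pos hik]
          have := (hd i).le
          positivity
        · simp [hik]
    calc T j = ∑' i : ℤ, (if i < j then (2:ℝ) ^ (σt * ((i:ℝ) - j)) * d i else 0) := rfl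
      _ ≤ ∑' i : ℤ, (2:ℝ) ^ (σt * ((k:ℝ) - j)) *
            (if i < k then (2:ℝ) ^ (σt * ((i:ℝ) - k)) * d i else 0) :=
          Summable.tsum_le_tsum hle (hsum j) hsummaj
      _ = (2:ℝ) ^ (σt * ((k:ℝ) - j)) * T k := tsum_mul_left
  -- pointwise bound on the main sum
  set M : ℤ → ℝ := fun j =>
    (if j < k then (2:ℝ) ^ (σt * ((j:ℝ) - k)) * d j else 0) +
      Cb * T k * (if j < k then (2:ℝ) ^ (-(a * ((k:ℝ) - j))) else 0) with hM
  have hMsum : Summable M :=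
    (hsum k).add (((geom_aux a ha k).1).mul_left (Cb * T k))
  have hkey : ∀ j : ℤ,
      (if j < k then (2:ℝ) ^ (μ * ((j:ℝ) - k)) * e j else 0) ≤ M j := by
    intro j
    by_cases hj : j < k
    · simp only [hM, if_pos hj]
      have hjkR : (j:ℝ) - k ≤ -1 := by
        have : (j:ℝ) ≤ (k:ℝ) - 1 := by exact_mod_cast Int.le_sub_one_of_lt hj
        linarith
      have hexp : μ * ((j:ℝ) - k) ≤ σt * ((j:ℝ) - k) := by nlinarith
      have hp1 : (2:ℝ) ^ (μ * ((j:ℝ) - k)) ≤ (2:ℝ) ^ (σt * ((j:ℝ) - k)) :=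
        Real.rpow_le_rpow_of_exponent_le (by norm_num) hexp
      have hp0 : (0:ℝ) < (2:ℝ) ^ (μ * ((j:ℝ) - k)) := Real.rpow_pos_of_pos (by norm_num) _
      have hej : e j ≤ d j + Cb * ((2:ℝ) ^ (σt * ((k:ℝ) - j)) * T k) := by
        rw [heT j]
        have h1 : c j * T j ≤ Cb * ((2:ℝ) ^ (σt * ((k:ℝ) - j)) * T k) :=
          mul_le_mul (hcb j) (hTle j hj) (hTnonneg j) hCb.le
        linarith
      have hstep : (2:ℝ) ^ (μ * ((j:ℝ) - k)) * e j ≤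
          (2:ℝ) ^ (μ * ((j:ℝ) - k)) * (d j + Cb * ((2:ℝ) ^ (σt * ((k:ℝ) - j)) * T k)) :=
        mul_le_mul_of_nonneg_left hej hp0.le
      have hsplit : (2:ℝ) ^ (μ * ((j:ℝ) - k)) * (d j + Cb * ((2:ℝ) ^ (σt * ((k:ℝ) - j)) * T k))
          ≤ (2:ℝ) ^ (σt * ((j:ℝ) - k)) * d j + Cb * T k * (2:ℝ) ^ (-(a * ((k:ℝ) - j))) := by
        have hd1 : (2:ℝ) ^ (μ * ((j:ℝ) - k)) * d j ≤ (2:ℝ) ^ (σt * ((j:ℝ) - k)) * d j :=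
          mul_le_mul_of_nonneg_right hp1 (hd j).le
        have hd2 : (2:ℝ) ^ (μ * ((j:ℝ) - k)) * (Cb * ((2:ℝ) ^ (σt * ((k:ℝ) - j)) * T k))
            = Cb * T k * (2:ℝ) ^ (-(a * ((k:ℝ) - j))) := by
          rw [show (2:ℝ) ^ (μ * ((j:ℝ) - k)) * (Cb * ((2:ℝ) ^ (σt * ((k:ℝ) - j)) * T k))
              = Cb * T k * ((2:ℝ) ^ (μ * ((j:ℝ) - k)) * (2:ℝ) ^ (σt * ((k:ℝ) - j))) by ring,
            ← Real.rpow_add (by norm_num : (0:ℝ) < 2)]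
          congr 1
          simp only [hadef]
          ring
        rw [mul_add]
        rw [hd2]
        linarith
      linarith
    · simp only [hM, if_neg hj]
      have : (0:ℝ) ≤ Cb * T k * 0 := by simp
      simp
  have hLnonneg : ∀ j : ℤ, 0 ≤ (if j < k then (2:ℝ) ^ (μ * ((j:ℝ) - k)) * e j else 0) := by
    intro j
    by_cases hj : j < k
    · simp only [if_pos hj]
      exact mul_nonneg (Real.rpow_pos_of_pos (by norm_num) _).le (hepos j).le
    · simp [hj]
  have hLsum : Summable (fun j : ℤ => if j < k then (2:ℝ) ^ (μ * ((j:ℝ) - k)) * e j else 0) :=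
    Summable.of_nonneg_of_le hLnonneg hkey hMsum
  have htsumle : (∑' j : ℤ, if j < k then (2:ℝ) ^ (μ * ((j:ℝ) - k)) * e j else 0)
      ≤ T k + Cb * T k * C' := by
    calc (∑' j : ℤ, if j < k then (2:ℝ) ^ (μ * ((j:ℝ) - k)) * e j else 0)
        ≤ ∑' j : ℤ, M j := Summable.tsum_le_tsum hkey hLsum hMsum
      _ = T k + Cb * T k * C' := by
          rw [hM, Summable.tsum_add (hsum k) (((geom_aux a ha k).1).mul_left (Cb * T k)),
            tsum_mul_left, (geom_aux a ha k).2]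
  have hck : 0 ≤ c k := (hc k).le
  have hfinal : c k * (∑' j : ℤ, if j < k then (2:ℝ) ^ (μ * ((j:ℝ) - k)) * e j else 0)
      ≤ (1 + Cb * C') * e k := by
    calc c k * (∑' j : ℤ, if j < k then (2:ℝ) ^ (μ * ((j:ℝ) - k)) * e j else 0)
        ≤ c k * (T k + Cb * T k * C') := mul_le_mul_of_nonneg_left htsumle hck
      _ = (1 + Cb * C') * (c k * T k) := by ring
      _ ≤ (1 + Cb * C') * e k := by
          apply mul_le_mul_of_nonneg_left _ (by positivity)
          rw [heT k]
          linarith [(hd k).le]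
  exact hfinal
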